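/- Let k ≥ 2 and ℓ ≥ 1 be integers and, for i ∈ {0,…,k−1}, let S_i^k be the set of vertices of ST_k^ℓ whose entry in position 0 equals i. Then S_i^k is an E^ℓ-set of ST_k^ℓ: every vertex v not in S_i^k has exactly ℓ neighbors in S_i^k, and, if ℓ > 1, any vertex adjacent to all ℓ of these neighbors equals v (v is their unique common neighbor). -/

import Mathlib

/-- A string of length `k*l` over the alphabet `Fin k` in which every symbol
occurs exactly `l` times (an `l`-set permutation). -/
def IsMSP (k l : ℕ) (v : Fin (k * l) → Fin k) : Prop :=
  ∀ a : Fin k, (Finset.univ.filter fun i => v i = a).card = l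

/-- The vertex set of the star `l`-set transposition graph `ST_k^l`. -/
abbrev MSP (k l : ℕ) : Type := {v : Fin (k * l) → Fin k // IsMSP k l v}

/-- Star-transposition adjacency: `w` is obtained from `v` by transposing position `0`
with a position `i ≠ 0` whose entry differs from that of position `0`. -/
def STAdj (k l : ℕ) (v w : Fin (k * l) → Fin k) : Prop :=
  ∃ i j : Fin (k * l), (j : ℕ) = 0 ∧ i ≠ j ∧ v i ≠ v j ∧ w = v ∘ Equiv.swap j i

/-- The star `l`-set transposition graph `ST_k^l`. -/
def STGraph (k l : ℕ) : SimpleGraph (MSP k l) :=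
  SimpleGraph.fromRel fun v w => STAdj k l v.1 w.1

lemma msp_comp {k l : ℕ} {v : Fin (k*l) → Fin k} (h : IsMSP k l v)
    (e : Equiv.Perm (Fin (k*l))) : IsMSP k l (v ∘ e) := by
  intro a
  have : (Finset.univ.filter fun x => (v ∘ e) x = a) =
      (Finset.univ.filter fun x => v x = a).map e.symm.toEmbedding := by
    ext x
    simp [Equiv.symm_apply_eq, eq_comm (a := x)]
  rw [this, Finset.card_map]
  exact h a

lemma stadj_symm {k l : ℕ} {v w : Fin (k*l) → Fin k} (h : STAdj k l v w) :
    STAdj k l w v := by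
  obtain ⟨q, j, hj, hqj, hvq, hw⟩ := h
  subst hw
  refine ⟨q, j, hj, hqj, ?_, ?_⟩
  · simp only [Function.comp, Equiv.swap_apply_left, Equiv.swap_apply_right]
    exact fun h' => hvq h'.symm
  · funext x; simp [Equiv.swap_apply_self]

lemma adj_iff {k l : ℕ} (v w : MSP k l) :
    (STGraph k l).Adj v w ↔ STAdj k l v.1 w.1 := by
  constructor
  · rintro ⟨hne, h | h⟩
    · exact h
    · exact stadj_symm h
  · intro h
    refine ⟨?_, Or.inl h⟩
    obtain ⟨q, j, hj, hqj, hvq, hw⟩ := h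
    intro he
    apply hvq
    have := congrFun (congrArg Subtype.val he) j
    rw [hw] at this
    simpa [Equiv.swap_apply_left] using this.symm

/-- for `k ≥ 2`, `l ≥ 1`, the set `S_i^k` of vertices with first entry `i`
is an E^l-set of `ST_k^l`: every vertex outside it has exactly `l` neighbors in it, and if
`l > 1` then it is the unique common neighbor of these `l` vertices. -/
theorem stmt2 (k l : ℕ) (hk : 2 ≤ k) (hl : 1 ≤ l) (i : Fin k)
    (S : Set (MSP k l))
    (hS : S = {v : MSP k l | v.1 ⟨0, Nat.mul_pos (by omega) (by omega)⟩ = i}) :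
    ∀ v : MSP k l, v ∉ S →
      ((STGraph k l).neighborSet v ∩ S).ncard = l ∧
      (1 < l → ∀ u : MSP k l,
        (∀ s ∈ (STGraph k l).neighborSet v ∩ S, (STGraph k l).Adj u s) → u = v) := by
  have hpos : 0 < k * l := Nat.mul_pos (by omega) (by omega)
  set z : Fin (k * l) := ⟨0, hpos⟩ with hzdef
  subst hS
  intro v hv
  simp only [Set.mem_setOf_eq] at hv
  have hvz : v.1 z ≠ i := hv
  set P : Finset (Fin (k * l)) := Finset.univ.filter (fun p => v.1 p = i) with hPdef
  have hmemP : ∀ p, p ∈ P ↔ v.1 p = i := by intro p; simp [hPdef]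
  have hPcard : P.card = l := v.2 i
  have hPz : ∀ p ∈ P, p ≠ z := by
    intro p hp he; exact hvz (he ▸ (hmemP p).1 hp)
  set f : Fin (k * l) → MSP k l := fun p => ⟨v.1 ∘ Equiv.swap z p, msp_comp v.2 _⟩ with hfdef
  have hfz : ∀ p, (f p).1 z = v.1 p := by
    intro p; simp [hfdef, Equiv.swap_apply_left]
  have hfp : ∀ p, (f p).1 p = v.1 z := by
    intro p; simp [hfdef, Equiv.swap_apply_right]
  have hfo : ∀ p x, x ≠ z → x ≠ p → (f p).1 x = v.1 x := by
    intro p x hx1 hx2; simp [hfdef, Equiv.swap_apply_of_ne_of_ne hx1 hx2]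
  have key : (STGraph k l).neighborSet v ∩
      {v : MSP k l | v.1 ⟨0, Nat.mul_pos (by omega) (by omega)⟩ = i} = f '' ↑P := by
    ext w
    simp only [Set.mem_inter_iff, SimpleGraph.mem_neighborSet, Set.mem_setOf_eq,
      Set.mem_image, Finset.mem_coe, adj_iff]
    constructor
    · rintro ⟨⟨q, j, hj, hqj, hvq, hw⟩, hwS⟩
      have hjz : j = z := Fin.ext hj
      subst hjz
      refine ⟨q, ?_, ?_⟩
      · rw [hmemP]
        have : w.1 z = v.1 q := by rw [hw]; simp [Equiv.swap_apply_left]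
        rw [← this]; exact hwS
      · apply Subtype.ext
        rw [hw]
    · rintro ⟨p, hp, rfl⟩
      have hpi := (hmemP p).1 hp
      have hpz := hPz p hp
      refine ⟨⟨p, z, rfl, hpz, ?_, rfl⟩, ?_⟩
      · rw [hpi]; exact fun h => hvz h.symm
      · show (f p).1 z = i
        rw [hfz]; exact hpi
  rw [key]
  have hinj : Set.InjOn f ↑P := by
    intro p hp p' hp' he
    by_contra hne
    have h1 : (f p).1 p = v.1 z := hfp p
    have h2 : (f p').1 p = v.1 p := hfo p' p (hPz p hp) hne
    rw [he] at h1
    exact hvz (h1.symm.trans (h2.trans ((hmemP p).1 hp)))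
  constructor
  · rw [Set.ncard_image_of_injOn hinj, Set.ncard_coe_finset, hPcard]
  · intro hl1 u hu
    by_contra hne
    -- get two distinct elements of P
    have h2le : 2 ≤ P.card := by omega
    obtain ⟨p, hp, p', hp', hpp'⟩ := Finset.one_lt_card.mp (show 1 < P.card by omega)
    -- adjacency facts for each p in P
    have hadj : ∀ p ∈ P, ∃ q : Fin (k*l), q ≠ z ∧ (f p).1 q ≠ (f p).1 z ∧
        u.1 = (f p).1 ∘ Equiv.swap z q := by
      intro p hp
      have := (adj_iff u (f p)).1 (hu (f p) ⟨p, hp, rfl⟩)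
      obtain ⟨q, j, hj, hqj, hq, hw⟩ := stadj_symm this
      have hjz : j = z := Fin.ext hj
      subst hjz
      exact ⟨q, hqj, hq, hw⟩
    -- if q_p = p then u = v
    have hqne : ∀ p ∈ P, ∀ q : Fin (k*l), q ≠ z →
        u.1 = (f p).1 ∘ Equiv.swap z q → q ≠ p := by
      intro p hp q hqz hw he
      subst he
      apply hne
      apply Subtype.ext
      rw [hw]
      funext x
      simp [hfdef, Equiv.swap_apply_self]
    -- so u p = v z for p in P (with its q)
    have hup : ∀ p ∈ P, u.1 p = v.1 z := by
      intro p hp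
      obtain ⟨q, hqz, hq, hw⟩ := hadj p hp
      have hqp := hqne p hp q hqz hw
      rw [hw]
      simp only [Function.comp]
      rw [Equiv.swap_apply_of_ne_of_ne (hPz p hp) (fun h => hqp h.symm)]
      exact hfp p
    -- but from p' : u p = i
    have hupi : u.1 p = i := by
      obtain ⟨q, hqz, hq, hw⟩ := hadj p' hp'
      have hqp' := hqne p' hp' q hqz hw
      rw [hw]
      simp only [Function.comp]
      by_cases hpq : p = q
      · rw [hpq, Equiv.swap_apply_right, hfz]
        exact (hmemP p').1 hp'
      · rw [Equiv.swap_apply_of_ne_of_ne (hPz p hp) hpq,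
          hfo p' p (hPz p hp) hpp']
        exact (hmemP p).1 hp
    rw [hup p hp] at hupi
    exact hvz hupi
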